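/- Let ψ be an n-qubit state (a tensor ψ : (Fin n → Fin 2) → ℂ), and let φ^{(a,b)}, φ^{(b,c)} be 2×2 matrices (a, b, c distinct indices). If ∑_{α_a,α_b} φ^{(a,b)}_{α_a,α_b} ψ = 0 and ∑_{α_b,α_c} φ^{(b,c)}_{α_b,α_c} ψ = 0 (contracting the indicated indices, for all values of the remaining indices), then the tensor ψ also satisfies ∑_{α_a,α_c} ω_{α_a,α_c} ψ = 0, where ω = φ^{(a,b)} ε φ^{(b,c)} with ε the antisymmetric 2×2 matrix. -/
import Mathlib


open Finset

/-- Generalization of the key lemma to an n-qubit tensor ψ: constraints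
φ^{(a,b)} and φ^{(b,c)} generate the constraint ω = φ^{(a,b)} ε φ^{(b,c)}
on the pair (a,c). -/
theorem stmt_1 {n : ℕ} (ψ : (Fin n → Fin 2) → ℂ)
    (φab φbc ε ω : Matrix (Fin 2) (Fin 2) ℂ)
    (hε : ε = Matrix.of ![![0, 1], ![-1, 0]])
    (a b c : Fin n) (hab : a ≠ b) (hbc : b ≠ c) (hac : a ≠ c)
    (hφab : ∀ x : Fin n → Fin 2,
      ∑ s, ∑ t, φab s t * ψ (Function.update (Function.update x a s) b t) = 0)
    (hφbc : ∀ x : Fin n → Fin 2,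
      ∑ s, ∑ t, φbc s t * ψ (Function.update (Function.update x b s) c t) = 0)
    (hω : ω = φab * ε * φbc) :
    ∀ x : Fin n → Fin 2,
      ∑ s, ∑ t, ω s t * ψ (Function.update (Function.update x a s) c t) = 0 := by
  intro x
  set Ψ : Fin 2 → Fin 2 → Fin 2 → ℂ := fun s u t =>
    ψ (Function.update (Function.update (Function.update x a s) b u) c t) with hΨ
  have Hab : ∀ t, ∑ s, ∑ u, φab s u * Ψ s u t = 0 := by
    intro t
    have h := hφab (Function.update x c t)
    have hcomm : ∀ (s u : Fin 2),
        Function.update (Function.update (Function.update x c t) a s) b u =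
        Function.update (Function.update (Function.update x a s) b u) c t := by
      intro s u
      rw [Function.update_comm hac.symm, Function.update_comm hbc.symm]
    simp only [hcomm] at h
    exact h
  have Hbc : ∀ s, ∑ u, ∑ t, φbc u t * Ψ s u t = 0 := fun s =>
    hφbc (Function.update x a s)
  have hgoal : ∀ s t, ψ (Function.update (Function.update x a s) c t) = Ψ s (x b) t := by
    intro s t
    simp only [hΨ]
    congr 1
    rw [show x b = (Function.update x a s) b from (Function.update_of_ne hab.symm s x).symm,
      Function.update_eq_self]
  simp only [hgoal]
  have Hab0 := Hab 0; have Hab1 := Hab 1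
  have Hbc0 := Hbc 0; have Hbc1 := Hbc 1
  simp only [Fin.sum_univ_two] at Hab0 Hab1 Hbc0 Hbc1 ⊢
  subst hω hε
  simp only [Matrix.mul_apply, Fin.sum_univ_two, Matrix.of_apply, Matrix.cons_val', Matrix.cons_val_zero,
    Matrix.cons_val_one, Matrix.head_cons, Matrix.empty_val', Matrix.cons_val_fin_one, Matrix.head_fin_const]
  have hx : x b = 0 ∨ x b = 1 := by omega
  rcases hx with hx | hx <;> rw [hx]
  · linear_combination (φbc 1 0) * Hab0 + (φbc 1 1) * Hab1 - (φab 0 1) * Hbc0 - (φab 1 1) * Hbc1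
  · linear_combination (-(φbc 0 0)) * Hab0 - (φbc 0 1) * Hab1 + (φab 0 0) * Hbc0 + (φab 1 0) * Hbc1
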